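/- For any x ∈ [n]^k, the image under p of the principal order ideal x^↓ in [n]^k equals the principal order ideal generated by p(x) in B_{1_G}(k,n); that is, p({z ∈ [n]^k : z ≤ x}) = {y ∈ B_{1_G}(k,n) : y ≼ p(x)}. -/

import Mathlib

/-- Action of a permutation on tuples: `g(x) = (x_{g⁻¹(1)},…,x_{g⁻¹(k)})`. -/
def act {k n : ℕ} (g : Equiv.Perm (Fin k)) (x : Fin k → Fin n) : Fin k → Fin n :=
  fun i => x (g⁻¹ i)

lemma act_act {k n : ℕ} (g h : Equiv.Perm (Fin k)) (x : Fin k → Fin n) :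
    act g (act h x) = act (g * h) x := by
  funext i; simp [act, mul_inv_rev]

lemma act_one {k n : ℕ} (x : Fin k → Fin n) : act (1 : Equiv.Perm (Fin k)) x = x := by
  funext i; simp [act]

/-- `B_{1_G}(k,n)`: lexicographically minimal `G`-orbit representatives in `[n]^k`. -/
def Btriv (k n : ℕ) (G : Subgroup (Equiv.Perm (Fin k))) : Set (Fin k → Fin n) :=
  {x | ∀ g : G, toLex x ≤ toLex (act (g : Equiv.Perm (Fin k)) x)}

/-- For the map `p` taking a tuple to the lexicographic minimum of its `G`-orbit,
the image of the principal order ideal `x^↓ ⊆ [n]^k` (componentwise order) is the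
principal order ideal of `p(x)` in `B_{1_G}(k,n)` for the order
`y ≼ y' ↔ ∃ g ∈ G, y ≤ g(y')`. -/
theorem stmt4 (k n : ℕ) (G : Subgroup (Equiv.Perm (Fin k)))
    (p : (Fin k → Fin n) → (Fin k → Fin n))
    (hp1 : ∀ x, ∃ g : G, p x = act (g : Equiv.Perm (Fin k)) x)
    (hp2 : ∀ x, ∀ g : G, toLex (p x) ≤ toLex (act (g : Equiv.Perm (Fin k)) x))
    (x : Fin k → Fin n) :
    p '' {z | z ≤ x} =
      {y | y ∈ Btriv k n G ∧ ∃ g : G, ∀ i, y i ≤ act (g : Equiv.Perm (Fin k)) (p x) i} := by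
  ext y
  constructor
  · rintro ⟨z, hz, rfl⟩
    obtain ⟨h, hh⟩ := hp1 z
    obtain ⟨h', hh'⟩ := hp1 x
    refine ⟨fun g => ?_, ⟨h * h'⁻¹, fun i => ?_⟩⟩
    · have := hp2 z (g * h)
      rwa [show act ((g * h : G) : Equiv.Perm (Fin k)) z
          = act (g : Equiv.Perm (Fin k)) (p z) by rw [hh, act_act]; norm_cast] at this
    · rw [hh, hh', act_act,
        show ((h * h'⁻¹ : G) : Equiv.Perm (Fin k)) * (h' : Equiv.Perm (Fin k))
          = (h : Equiv.Perm (Fin k)) by push_cast; group]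
      exact hz _
  · rintro ⟨hy, g, hg⟩
    obtain ⟨h', hh'⟩ := hp1 x
    set c : Equiv.Perm (Fin k) := (g : Equiv.Perm (Fin k)) * (h' : Equiv.Perm (Fin k))
    have hcy : act c (act c⁻¹ y) = y := by rw [act_act, mul_inv_cancel, act_one]
    refine ⟨act c⁻¹ y, fun i => ?_, ?_⟩
    · have h1 := hg (c i)
      rw [hh', act_act] at h1
      simpa [act, c] using h1
    · obtain ⟨h'', hh''⟩ := hp1 (act c⁻¹ y)
      have hle1 : toLex (p (act c⁻¹ y)) ≤ toLex y := by
        have := hp2 (act c⁻¹ y) (g * h')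
        rwa [show act ((g * h' : G) : Equiv.Perm (Fin k)) (act c⁻¹ y) = y by
          rw [show ((g * h' : G) : Equiv.Perm (Fin k)) = c by push_cast; rfl]; exact hcy] at this
      have hle2 : toLex y ≤ toLex (p (act c⁻¹ y)) := by
        have := hy (h'' * (g * h')⁻¹)
        rwa [show act ((h'' * (g * h')⁻¹ : G) : Equiv.Perm (Fin k)) y
            = p (act c⁻¹ y) by
          rw [hh'', show ((h'' * (g * h')⁻¹ : G) : Equiv.Perm (Fin k))
              = (h'' : Equiv.Perm (Fin k)) * c⁻¹ by push_cast; simp only [c, mul_inv_rev]]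
          rw [← act_act]] at this
      exact toLex.injective (le_antisymm hle1 hle2)
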